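/- Let k ≥ 1 and let X ⊆ [0,1]^k ⊂ ℝ^k be a finite set with |X| ≥ m for some integer m ≥ 3. Then there exist two distinct points p, q ∈ X such that |p - q|^2 ≤ (⌊m/2⌋·⌈m/2⌉ / C(m,2)) · k, where C(m,2) = m(m-1)/2. -/

import Mathlib

open Finset

private lemma coord_bound {α : Type*} (m : ℕ) (hm : 3 ≤ m)
    (Y : Finset α) (hY : Y.card = m) (a : α → ℝ)
    (ha : ∀ p ∈ Y, a p ∈ Set.Icc (0:ℝ) 1) :
    (m : ℝ) * (∑ p ∈ Y, a p ^ 2) - (∑ p ∈ Y, a p) ^ 2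
      ≤ ((m : ℝ) ^ 2 - ((m % 2 : ℕ) : ℝ)) / 4 := by
  classical
  set S := ∑ p ∈ Y, a p with hS
  set Q := ∑ p ∈ Y, a p ^ 2 with hQ
  have hD : S - Q = ∑ p ∈ Y, a p * (1 - a p) := by
    rw [hS, hQ, ← Finset.sum_sub_distrib]
    exact Finset.sum_congr rfl fun p hp => by ring
  have hD0 : 0 ≤ S - Q := by
    rw [hD]
    refine Finset.sum_nonneg fun p hp => ?_
    have h1 := (ha p hp).1; have h2 := (ha p hp).2
    nlinarith
  have hm3 : (3:ℝ) ≤ (m:ℝ) := by exact_mod_cast hm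
  have key : ((m % 2 : ℕ) : ℝ)/4 ≤ (S - m/2)^2 + m * (S - Q) := by
    rcases Nat.even_or_odd m with he | ho
    · have h0 : m % 2 = 0 := Nat.even_iff.mp he
      rw [h0]
      push_cast
      nlinarith [sq_nonneg (S - (m:ℝ)/2)]
    · have h1 : m % 2 = 1 := Nat.odd_iff.mp ho
      rw [h1]
      push_cast
      set n := (Y.filter (fun p => (1:ℝ)/2 ≤ a p)).card with hn
      have habs : |S - (n:ℝ)| ≤ 2 * (S - Q) := by
        have hrw : S - (n:ℝ) = ∑ p ∈ Y, (a p - if (1:ℝ)/2 ≤ a p then 1 else 0) := by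
          rw [Finset.sum_sub_distrib, hS]
          congr 1
          simp [hn]
        rw [hrw]
        calc |∑ p ∈ Y, (a p - if (1:ℝ)/2 ≤ a p then 1 else 0)|
            ≤ ∑ p ∈ Y, |a p - if (1:ℝ)/2 ≤ a p then 1 else 0| :=
              Finset.abs_sum_le_sum_abs _ _
          _ ≤ ∑ p ∈ Y, 2 * (a p * (1 - a p)) := by
              refine Finset.sum_le_sum fun p hp => ?_
              have h1 := (ha p hp).1; have h2 := (ha p hp).2
              by_cases hc : (1:ℝ)/2 ≤ a p
              · rw [if_pos hc, abs_of_nonpos (by linarith)]; nlinarith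
              · rw [if_neg hc, sub_zero, abs_of_nonneg h1]
                push_neg at hc; nlinarith
          _ = 2 * (S - Q) := by rw [hD, Finset.mul_sum]
      have hnm : (1:ℝ)/2 ≤ |(n:ℝ) - (m:ℝ)/2| := by
        have h2n : (2*(n:ℤ) - m) ≠ 0 := by omega
        have hint : (1:ℤ) ≤ |2*(n:ℤ) - m| := by
          rcases lt_or_gt_of_ne h2n with h|h
          · rw [abs_of_neg h]; omega
          · rw [abs_of_pos h]; omega
        have : (1:ℝ) ≤ |((2*(n:ℤ) - m : ℤ) : ℝ)| := by
          rw [← Int.cast_abs]; exact_mod_cast hint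
        have heq : ((2*(n:ℤ) - m : ℤ) : ℝ) = 2 * ((n:ℝ) - (m:ℝ)/2) := by
          push_cast; ring
        rw [heq, abs_mul, abs_two] at this
        linarith
      by_cases hcase : S - Q ≤ 1/4
      · have h1 : (1:ℝ)/2 - 2*(S - Q) ≤ |S - (m:ℝ)/2| := by
          have := abs_sub_abs_le_abs_sub ((n:ℝ) - (m:ℝ)/2) ((n:ℝ) - S)
          have h2 : |(n:ℝ) - S| = |S - (n:ℝ)| := abs_sub_comm _ _
          have h3 : ((n:ℝ) - (m:ℝ)/2) - ((n:ℝ) - S) = S - (m:ℝ)/2 := by ring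
          rw [h3, h2] at this
          linarith
        have h2 : (0:ℝ) ≤ 1/2 - 2*(S-Q) := by linarith
        have h3 : (1/2 - 2*(S-Q))^2 ≤ (S - (m:ℝ)/2)^2 := by
          have := abs_nonneg (S - (m:ℝ)/2)
          nlinarith [sq_abs (S - (m:ℝ)/2)]
        nlinarith
      · nlinarith [sq_nonneg (S - (m:ℝ)/2)]
  nlinarith [key]

/-- For `k ≥ 1` and a finite set `X ⊆ [0,1]^k` with `|X| ≥ m` for some `m ≥ 3`, some two
distinct points `p, q ∈ X` satisfy `|p-q|² ≤ (⌊m/2⌋·⌈m/2⌉ / C(m,2))·k`. -/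
theorem stmt_11 (k m : ℕ) (hk : 1 ≤ k) (hm : 3 ≤ m)
    (X : Finset (EuclideanSpace ℝ (Fin k))) (hcard : m ≤ X.card)
    (hcube : ∀ x ∈ X, ∀ i, x i ∈ Set.Icc (0 : ℝ) 1) :
    ∃ p ∈ X, ∃ q ∈ X, p ≠ q ∧
      dist p q ^ 2 ≤ ((m / 2 * ((m + 1) / 2) : ℕ) : ℝ) / (m.choose 2 : ℝ) * k := by
  classical
  by_contra hcon
  push_neg at hcon
  obtain ⟨Y, hYX, hYm⟩ := Finset.exists_subset_card_eq hcard
  set B : ℝ := ((m / 2 * ((m + 1) / 2) : ℕ) : ℝ) / (m.choose 2 : ℝ) * k with hB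
  -- squared distance as a sum over coordinates
  have hdist : ∀ p q : EuclideanSpace ℝ (Fin k),
      dist p q ^ 2 = ∑ i, (p i - q i) ^ 2 := by
    intro p q
    rw [EuclideanSpace.dist_eq, Real.sq_sqrt (by positivity)]
    exact Finset.sum_congr rfl fun i _ => by rw [Real.dist_eq, sq_abs]
  -- expansion of the double sum for each coordinate
  have expand : ∀ a : (EuclideanSpace ℝ (Fin k)) → ℝ,
      ∑ p ∈ Y, ∑ q ∈ Y, (a p - a q)^2
        = 2 * ((m:ℝ) * (∑ p ∈ Y, a p ^ 2) - (∑ p ∈ Y, a p)^2) := by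
    intro a
    have h1 : ∀ p q : EuclideanSpace ℝ (Fin k),
        (a p - a q)^2 = a p^2 + a q^2 - 2*a p*a q := fun p q => by ring
    simp_rw [h1]
    simp_rw [Finset.sum_sub_distrib]
    simp_rw [Finset.sum_add_distrib]
    simp_rw [Finset.sum_const, hYm]
    simp_rw [mul_assoc, ← Finset.mul_sum]
    simp_rw [← Finset.sum_mul]
    simp_rw [nsmul_eq_mul]
    rw [← Finset.mul_sum]
    ring
  -- upper bound on the double sum
  have hub : ∑ p ∈ Y, ∑ q ∈ Y, dist p q ^ 2
      ≤ (k:ℝ) * (2 * (((m:ℝ)^2 - ((m % 2 : ℕ):ℝ))/4)) := by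
    have hswap : ∑ p ∈ Y, ∑ q ∈ Y, dist p q ^ 2
        = ∑ i : Fin k, ∑ p ∈ Y, ∑ q ∈ Y, (p i - q i)^2 := by
      simp_rw [hdist]
      exact Eq.trans (Finset.sum_congr rfl fun p _ => Finset.sum_comm) Finset.sum_comm
    rw [hswap]
    calc ∑ i : Fin k, ∑ p ∈ Y, ∑ q ∈ Y, (p i - q i)^2
        ≤ ∑ i : Fin k, 2 * (((m:ℝ)^2 - ((m % 2 : ℕ):ℝ))/4) := by
          refine Finset.sum_le_sum fun i _ => ?_
          rw [expand (fun p => p i)]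
          have := coord_bound m hm Y hYm (fun p => p i)
            (fun p hp => hcube p (hYX hp) i)
          linarith
      _ = (k:ℝ) * (2 * (((m:ℝ)^2 - ((m % 2 : ℕ):ℝ))/4)) := by
          rw [Finset.sum_const, Finset.card_univ, Fintype.card_fin, nsmul_eq_mul]
  -- lower bound on the double sum
  have hBlt : ∀ p ∈ Y, ∀ q ∈ Y, p ≠ q → B < dist p q ^ 2 :=
    fun p hp q hq hpq => hcon p (hYX hp) q (hYX hq) hpq
  have hlb : (m:ℝ) * (((m:ℝ) - 1) * B) < ∑ p ∈ Y, ∑ q ∈ Y, dist p q ^ 2 := by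
    have hYne : Y.Nonempty := by
      rw [← Finset.card_pos, hYm]; omega
    have inner : ∀ p ∈ Y, ((m:ℝ)-1) * B < ∑ q ∈ Y, dist p q ^ 2 := by
      intro p hp
      rw [← Finset.add_sum_erase Y _ hp, dist_self]
      have hne : (Y.erase p).Nonempty := by
        rw [← Finset.card_pos, Finset.card_erase_of_mem hp, hYm]; omega
      have hlt : ∑ _q ∈ Y.erase p, B < ∑ q ∈ Y.erase p, dist p q ^ 2 :=
        Finset.sum_lt_sum_of_nonempty hne
          (fun q hq => hBlt p hp q (Finset.mem_of_mem_erase hq)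
            (Finset.ne_of_mem_erase hq).symm)
      rw [Finset.sum_const, Finset.card_erase_of_mem hp, hYm, nsmul_eq_mul] at hlt
      have hcast : ((m - 1 : ℕ) : ℝ) = (m:ℝ) - 1 := by
        rw [Nat.cast_sub (by omega)]; norm_num
      rw [hcast] at hlt
      simpa using hlt
    have hlt : ∑ _p ∈ Y, ((m:ℝ)-1) * B < ∑ p ∈ Y, ∑ q ∈ Y, dist p q ^ 2 :=
      Finset.sum_lt_sum_of_nonempty hYne inner
    rw [Finset.sum_const, hYm, nsmul_eq_mul] at hlt
    exact hlt
  -- arithmetic facts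
  have hFnat : 4 * (m/2*((m+1)/2)) = m*m - m % 2 := by
    rcases Nat.even_or_odd m with ⟨t, rfl⟩ | ⟨t, rfl⟩
    · have e1 : (t+t)/2 = t := by omega
      have e2 : (t+t+1)/2 = t := by omega
      rw [e1, e2]
      have h : (t+t)*(t+t) = 4*(t*t) := by ring
      omega
    · have e1 : (2*t+1)/2 = t := by omega
      have e2 : (2*t+1+1)/2 = t+1 := by omega
      rw [e1, e2]
      have h : (2*t+1)*(2*t+1) = 4*(t*(t+1)) + 1 := by ring
      omega
  have hle : m % 2 ≤ m*m := by nlinarith [Nat.mod_lt m (show 0 < 2 by norm_num)]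
  have hF : ((m/2*((m+1)/2) : ℕ):ℝ) = ((m:ℝ)^2 - ((m % 2 : ℕ):ℝ))/4 := by
    have hc := congrArg (Nat.cast : ℕ → ℝ) hFnat
    push_cast [Nat.cast_sub hle] at hc ⊢
    nlinarith [hc, sq_nonneg ((m:ℝ))]
  have hCnat : 2 * m.choose 2 = m * (m-1) := by
    obtain ⟨s, rfl⟩ : ∃ s, m = s + 1 := ⟨m-1, by omega⟩
    rw [Nat.choose_two_right]
    simp only [Nat.add_sub_cancel]
    rw [Nat.mul_div_cancel']
    exact (by rw [mul_comm]; exact Nat.even_mul_succ_self s : Even ((s+1)*s)).two_dvd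
  have hC : (m.choose 2 : ℝ) = (m:ℝ)*((m:ℝ)-1)/2 := by
    have hc := congrArg (Nat.cast : ℕ → ℝ) hCnat
    push_cast [Nat.cast_sub (show 1 ≤ m by omega)] at hc
    linarith
  have hm0 : (m:ℝ) ≠ 0 := by positivity
  have hm1 : (m:ℝ) - 1 ≠ 0 := by
    have : (3:ℝ) ≤ (m:ℝ) := by exact_mod_cast hm
    linarith
  have hfinal : (m:ℝ) * (((m:ℝ) - 1) * B)
      = (k:ℝ) * (2 * (((m:ℝ)^2 - ((m % 2 : ℕ):ℝ))/4)) := by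
    rw [hB, hF, hC]
    field_simp
  rw [hfinal] at hlb
  linarith
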